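/- arXiv:2108.06564 — 2 statements merged into one kernel-verified Lean document; each statement's English description precedes it below -/
import Mathlib

section
/- Let ω > 0 satisfy the no-resonance condition Nω ≠ e^{2(log 2 − γ)} for every natural number N. Then for every A₀ > 0 there exists Q > 0 such that for all real α₀ with 0 < |α₀| < A₀ and all p ∈ ℂ with Re(p) < −Q and Im(p) ∈ [0,ω], the operator I − 𝓛(α₀,p) is invertible on ℓ²(ℤ;ℂ) and its inverse equals the Neumann series ∑_{m≥0} 𝓛(α₀,p)^m, convergent in operator norm. -/
open MeasureTheory
open scoped ENNReal

/-- `β₀ := (γ - log 2)/(2π) - i/8`, with `γ` the Euler–Mascheroni constant. -/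
noncomputable def beta0 : ℂ :=
  (((Real.eulerMascheroniConstant - Real.log 2) / (2 * Real.pi) : ℝ) : ℂ) - Complex.I / 8

/-- `h(z) := 2πi / (log z + 4πβ₀)`, with the principal branch of the complex logarithm. -/
noncomputable def hfun (z : ℂ) : ℂ :=
  2 * (Real.pi : ℂ) * Complex.I / (Complex.log z + 4 * (Real.pi : ℂ) * beta0)

lemma four_pi_beta0_re : (4 * (Real.pi:ℂ) * beta0).re
    = 2 * (Real.eulerMascheroniConstant - Real.log 2) := by
  have hπ : (Real.pi:ℝ) ≠ 0 := Real.pi_ne_zero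
  have hb : beta0.re = (Real.eulerMascheroniConstant - Real.log 2) / (2 * Real.pi) := by
    unfold beta0
    rw [Complex.sub_re, Complex.ofReal_re]
    norm_num [Complex.div_re]
  have h4 : (4 * (Real.pi:ℂ) * beta0).re = (4 * Real.pi) * beta0.re := by
    rw [show (4 * (Real.pi:ℂ)) = ((4 * Real.pi : ℝ) : ℂ) by push_cast; ring,
      Complex.re_ofReal_mul]
  rw [h4, hb]
  field_simp
  ring

/-- Bound on `hfun z` when the real part of the log-denominator is at least `D`. -/
lemma hfun_norm_le {z : ℂ} {D : ℝ} (hD : 0 < D)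
    (h : D ≤ (Complex.log z + 4 * (Real.pi:ℂ) * beta0).re) :
    ‖hfun z‖ ≤ 2 * Real.pi / D := by
  have hden : D ≤ ‖Complex.log z + 4 * (Real.pi:ℂ) * beta0‖ := by
    refine h.trans ?_
    simpa using Complex.re_le_norm (Complex.log z + 4 * (Real.pi:ℂ) * beta0)
  have hnum : ‖2 * (Real.pi:ℂ) * Complex.I‖ = 2 * Real.pi := by
    simp [map_mul,
      abs_of_pos Real.pi_pos]
  rw [hfun, norm_div, hnum]
  gcongr

/-- Under the no-resonance condition, for every `A₀ > 0` there is `Q > 0` such that for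
`0 < |α₀| < A₀` and `p` with `Re p < -Q`, `Im p ∈ [0,ω]`, the operator `I - 𝓛(α₀,p)` is
invertible on `ℓ²(ℤ;ℂ)` and its inverse is the operator-norm convergent Neumann series
`∑_{m ≥ 0} 𝓛(α₀,p)^m`. -/
theorem neumann_series_inverse (ω : ℝ) (hω : 0 < ω)
    (hnores : ∀ N : ℕ,
      (N : ℝ) * ω ≠ Real.exp (2 * (Real.log 2 - Real.eulerMascheroniConstant))) :
    ∀ A₀ : ℝ, 0 < A₀ → ∃ Q : ℝ, 0 < Q ∧
      ∀ α₀ : ℝ, 0 < |α₀| → |α₀| < A₀ →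
        ∀ p : ℂ, p.re < -Q → p.im ∈ Set.Icc 0 ω →
          ∀ L : lp (fun _ : ℤ => ℂ) 2 →L[ℂ] lp (fun _ : ℤ => ℂ) 2,
            (∀ u : lp (fun _ : ℤ => ℂ) 2, ∀ n : ℤ,
              (L u : ∀ _ : ℤ, ℂ) n =
                -(α₀ : ℂ) * hfun (p + Complex.I * (ω : ℂ) * (n : ℂ)) *
                  ((u : ∀ _ : ℤ, ℂ) (n + 1) - (u : ∀ _ : ℤ, ℂ) (n - 1))) →
            ∃ B : lp (fun _ : ℤ => ℂ) 2 →L[ℂ] lp (fun _ : ℤ => ℂ) 2,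
              B * (1 - L) = 1 ∧ (1 - L) * B = 1 ∧
              Filter.Tendsto (fun N : ℕ => ∑ m ∈ Finset.range N, L ^ m)
                Filter.atTop (nhds B) := by
  intro A₀ hA₀
  set C : ℝ := 2 * (Real.log 2 - Real.eulerMascheroniConstant) with hC
  set D : ℝ := 4 * Real.pi * A₀ + 1 with hDdef
  have hπ := Real.pi_pos
  have hD : 0 < D := by positivity
  set M : ℝ := 2 * Real.pi / D with hM
  have hMpos : 0 < M := by positivity
  refine ⟨Real.exp (C + D), Real.exp_pos _, ?_⟩
  intro α₀ hα₀ hα₀A p hp _ L hform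
  -- uniform bound on `hfun` at the relevant points
  have hfb : ∀ n : ℤ, ‖hfun (p + Complex.I * (ω : ℂ) * (n : ℂ))‖ ≤ M := by
    intro n
    set z : ℂ := p + Complex.I * (ω : ℂ) * (n : ℂ) with hz
    have hzre : z.re = p.re := by simp [hz]
    have habs : Real.exp (C + D) < ‖z‖ := by
      have h1 : -p.re ≤ |z.re| := by rw [hzre]; exact neg_le_abs _
      have h2 := Complex.abs_re_le_norm z
      linarith [h1.trans h2]
    have hlog : C + D ≤ Real.log ‖z‖ := by
      rw [← Real.log_exp (C + D)]
      exact Real.log_le_log (Real.exp_pos _) habs.le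
    have hre : D ≤ (Complex.log z + 4 * (Real.pi:ℂ) * beta0).re := by
      rw [Complex.add_re, Complex.log_re, four_pi_beta0_re]
      have hrw : 2 * (Real.eulerMascheroniConstant - Real.log 2) = -C := by rw [hC]; ring
      rw [hrw]; linarith
    exact hfun_norm_le hD hre
  set c : ℝ := |α₀| * M with hc
  have hcpos : 0 < c := mul_pos hα₀ hMpos
  -- operator norm bound
  have h2t : ((2:ℝ≥0∞)).toReal = ((2:ℕ):ℝ) := by norm_num
  have hrp : ∀ x : ℝ, x ^ ((2:ℝ≥0∞)).toReal = x ^ (2:ℕ) := by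
    intro x; rw [h2t, Real.rpow_natCast]
  have h2pos : (0:ℝ) < ((2:ℝ≥0∞)).toReal := by rw [h2t]; norm_num
  have hnormLe : ∀ u : lp (fun _ : ℤ => ℂ) 2, ‖L u‖ ≤ 2 * c * ‖u‖ := by
    intro u
    have hsu : Summable (fun n : ℤ => ‖(u : ∀ _ : ℤ, ℂ) n‖ ^ (2:ℕ)) := by
      have := (lp.memℓp u).summable h2pos
      simpa only [hrp] using this
    have hsa : Summable (fun n : ℤ => ‖(u : ∀ _ : ℤ, ℂ) (n + 1)‖ ^ (2:ℕ)) := by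
      have h := (Equiv.addRight (1:ℤ)).summable_iff.mpr hsu
      simpa [Function.comp_def] using h
    have hsb : Summable (fun n : ℤ => ‖(u : ∀ _ : ℤ, ℂ) (n - 1)‖ ^ (2:ℕ)) := by
      have h := (Equiv.subRight (1:ℤ)).summable_iff.mpr hsu
      simpa [Function.comp_def] using h
    have hta : (∑' n : ℤ, ‖(u : ∀ _ : ℤ, ℂ) (n + 1)‖ ^ (2:ℕ))
        = ∑' n : ℤ, ‖(u : ∀ _ : ℤ, ℂ) n‖ ^ (2:ℕ) := by
      have h := (Equiv.addRight (1:ℤ)).tsum_eq (fun n => ‖(u : ∀ _ : ℤ, ℂ) n‖ ^ (2:ℕ))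
      simpa using h
    have htb : (∑' n : ℤ, ‖(u : ∀ _ : ℤ, ℂ) (n - 1)‖ ^ (2:ℕ))
        = ∑' n : ℤ, ‖(u : ∀ _ : ℤ, ℂ) n‖ ^ (2:ℕ) := by
      have h := (Equiv.subRight (1:ℤ)).tsum_eq (fun n => ‖(u : ∀ _ : ℤ, ℂ) n‖ ^ (2:ℕ))
      simpa using h
    have hnu : ‖u‖ ^ (2:ℕ) = ∑' n : ℤ, ‖(u : ∀ _ : ℤ, ℂ) n‖ ^ (2:ℕ) := by
      have := lp.norm_rpow_eq_tsum h2pos u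
      simpa only [hrp] using this
    have hnLu : ‖L u‖ ^ (2:ℕ) = ∑' n : ℤ, ‖(L u : ∀ _ : ℤ, ℂ) n‖ ^ (2:ℕ) := by
      have := lp.norm_rpow_eq_tsum h2pos (L u)
      simpa only [hrp] using this
    have hptw : ∀ n : ℤ, ‖(L u : ∀ _ : ℤ, ℂ) n‖ ^ (2:ℕ)
        ≤ 2 * c ^ (2:ℕ) * (‖(u : ∀ _ : ℤ, ℂ) (n + 1)‖ ^ (2:ℕ)
          + ‖(u : ∀ _ : ℤ, ℂ) (n - 1)‖ ^ (2:ℕ)) := by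
      intro n
      rw [hform u n]
      have h1 : ‖-(α₀ : ℂ) * hfun (p + Complex.I * (ω : ℂ) * (n : ℂ)) *
          ((u : ∀ _ : ℤ, ℂ) (n + 1) - (u : ∀ _ : ℤ, ℂ) (n - 1))‖
          ≤ c * (‖(u : ∀ _ : ℤ, ℂ) (n + 1)‖ + ‖(u : ∀ _ : ℤ, ℂ) (n - 1)‖) := by
        rw [norm_mul, norm_mul, norm_neg, Complex.norm_real, hc]
        exact mul_le_mul (mul_le_mul_of_nonneg_left (hfb n) (abs_nonneg _))
          (norm_sub_le _ _) (norm_nonneg _) (by positivity)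
      have h2 := norm_nonneg ((u : ∀ _ : ℤ, ℂ) (n + 1))
      have h3 := norm_nonneg ((u : ∀ _ : ℤ, ℂ) (n - 1))
      have h4 := norm_nonneg (-(α₀ : ℂ) * hfun (p + Complex.I * (ω : ℂ) * (n : ℂ)) *
          ((u : ∀ _ : ℤ, ℂ) (n + 1) - (u : ∀ _ : ℤ, ℂ) (n - 1)))
      nlinarith [sq_nonneg (‖(u : ∀ _ : ℤ, ℂ) (n + 1)‖ - ‖(u : ∀ _ : ℤ, ℂ) (n - 1)‖),
        hcpos.le]
    have hsmaj : Summable (fun n : ℤ => 2 * c ^ (2:ℕ) *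
        (‖(u : ∀ _ : ℤ, ℂ) (n + 1)‖ ^ (2:ℕ) + ‖(u : ∀ _ : ℤ, ℂ) (n - 1)‖ ^ (2:ℕ))) :=
      (hsa.add hsb).mul_left _
    have hsLu : Summable (fun n : ℤ => ‖(L u : ∀ _ : ℤ, ℂ) n‖ ^ (2:ℕ)) := by
      have := (lp.memℓp (L u)).summable h2pos
      simpa only [hrp] using this
    have hkey : ‖L u‖ ^ (2:ℕ) ≤ (2 * c * ‖u‖) ^ (2:ℕ) := by
      rw [hnLu]
      calc ∑' n : ℤ, ‖(L u : ∀ _ : ℤ, ℂ) n‖ ^ (2:ℕ)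
          ≤ ∑' n : ℤ, 2 * c ^ (2:ℕ) * (‖(u : ∀ _ : ℤ, ℂ) (n + 1)‖ ^ (2:ℕ)
            + ‖(u : ∀ _ : ℤ, ℂ) (n - 1)‖ ^ (2:ℕ)) := Summable.tsum_le_tsum hptw hsLu hsmaj
        _ = 2 * c ^ (2:ℕ) * (∑' n : ℤ, (‖(u : ∀ _ : ℤ, ℂ) (n + 1)‖ ^ (2:ℕ)
            + ‖(u : ∀ _ : ℤ, ℂ) (n - 1)‖ ^ (2:ℕ))) := tsum_mul_left
        _ = 2 * c ^ (2:ℕ) * (‖u‖ ^ (2:ℕ) + ‖u‖ ^ (2:ℕ)) := by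
            rw [Summable.tsum_add hsa hsb, hta, htb, hnu]
        _ = (2 * c * ‖u‖) ^ (2:ℕ) := by ring
    have h2c : (0:ℝ) ≤ 2 * c * ‖u‖ := by positivity
    exact (pow_le_pow_iff_left₀ (norm_nonneg _) h2c (by norm_num)).mp hkey
  have hLnorm : ‖L‖ < 1 := by
    have hle : ‖L‖ ≤ 2 * c := L.opNorm_le_bound (by positivity) hnormLe
    have h2c : 2 * c < 1 := by
      have hcd : 2 * c = 4 * Real.pi * |α₀| / D := by rw [hc, hM]; field_simp; ring
      rw [hcd, div_lt_one hD, hDdef]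
      nlinarith
    exact hle.trans_lt h2c
  exact ⟨∑' m : ℕ, L ^ m, geom_series_mul_neg L hLnorm, mul_neg_geom_series L hLnorm,
    (summable_geometric_of_norm_lt_one hLnorm).hasSum.tendsto_sum_nat⟩
end

section
/- Let ω > 0 satisfy the no-resonance condition Nω ≠ e^{2(log 2 − γ)} for every natural number N. Then there exists A₀ > 0 such that for every real α₀ with 0 < |α₀| < A₀, the set P(α₀) := {p ∈ S_ℓ(ω) : there exists ξ ∈ ℓ²(ℤ;ℂ), ξ ≠ 0, with ξ = 𝓛(α₀,p)ξ} contains at most one element, and every element of P(α₀) lies in the interior of S_ℓ(ω) := {p ∈ ℂ : Re(p) < 0, Im(p) ∈ [0,ω]}, i.e. has imaginary part in the open interval (0,ω). -/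
open MeasureTheory

/-- The set of points `p` in the closed strip `S_ℓ(ω)` at which the homogeneous equation
`ξ = 𝓛(α₀,p)ξ` admits a nontrivial `ℓ²(ℤ;ℂ)` solution. -/
def poleSet (α₀ ω : ℝ) : Set ℂ :=
  {p : ℂ | p.re < 0 ∧ p.im ∈ Set.Icc 0 ω ∧
    ∃ ξ : ℤ → ℂ, Memℓp ξ 2 ∧ ξ ≠ 0 ∧
      ∀ n : ℤ, ξ n =
        -(α₀ : ℂ) * hfun (p + Complex.I * (ω : ℂ) * (n : ℂ)) * (ξ (n + 1) - ξ (n - 1))}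

noncomputable def Complex.abs : AbsoluteValue ℂ ℝ := NormedField.toAbsoluteValue ℂ

lemma Complex.norm_eq_abs (z : ℂ) : ‖z‖ = Complex.abs z := rfl

lemma Complex.abs.pos {z : ℂ} (hz : z ≠ 0) : 0 < Complex.abs z := norm_pos_iff.mpr hz

lemma Complex.abs_I : Complex.abs Complex.I = 1 := Complex.norm_I

lemma Complex.abs_ofReal (r : ℝ) : Complex.abs (r : ℂ) = |r| := Complex.norm_real r

lemma Complex.abs_conj (z : ℂ) : Complex.abs ((starRingEnd ℂ) z) = Complex.abs z := Complex.norm_conj z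

lemma Complex.abs_exp (z : ℂ) : Complex.abs (Complex.exp z) = Real.exp z.re := Complex.norm_exp z

lemma Complex.abs_exp_sub_one_le {x : ℂ} (hx : Complex.abs x ≤ 1) :
    Complex.abs (Complex.exp x - 1) ≤ 2 * Complex.abs x := Complex.norm_exp_sub_one_le hx

lemma Complex.abs_re_le_abs (z : ℂ) : |z.re| ≤ Complex.abs z := Complex.abs_re_le_norm z

lemma Complex.abs_im_le_abs (z : ℂ) : |z.im| ≤ Complex.abs z := Complex.abs_im_le_norm z

noncomputable def y0 : ℝ := Real.exp (2 * (Real.log 2 - Real.eulerMascheroniConstant))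

lemma y0_pos : 0 < y0 := Real.exp_pos _

lemma four_pi_beta0 : 4 * (Real.pi : ℂ) * beta0 =
    ((2 * (Real.eulerMascheroniConstant - Real.log 2) : ℝ) : ℂ) + ((-(Real.pi/2) : ℝ) : ℂ) * Complex.I := by
  have hπ : (Real.pi : ℂ) ≠ 0 := Complex.ofReal_ne_zero.mpr Real.pi_ne_zero
  rw [beta0]
  push_cast
  field_simp
  ring

lemma one_eq : Complex.I * (y0 : ℂ) * Complex.exp (4 * (Real.pi : ℂ) * beta0) = 1 := by
  rw [four_pi_beta0, Complex.exp_add, Complex.exp_mul_I]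
  have h1 : Complex.cos ((-(Real.pi/2) : ℝ) : ℂ) = 0 := by
    rw [← Complex.ofReal_cos]; simp
  have h2 : Complex.sin ((-(Real.pi/2) : ℝ) : ℂ) = -1 := by
    rw [← Complex.ofReal_sin]; simp
  rw [h1, h2]
  rw [← Complex.ofReal_exp]
  have : (y0 : ℂ) * ((Real.exp (2 * (Real.eulerMascheroniConstant - Real.log 2)) : ℝ) : ℂ) = 1 := by
    rw [← Complex.ofReal_mul, y0, ← Real.exp_add,
      show (2 * (Real.log 2 - Real.eulerMascheroniConstant) + 2 * (Real.eulerMascheroniConstant - Real.log 2)) = 0 by ring]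
    simp
  calc Complex.I * (y0:ℂ) * ((Real.exp (2 * (Real.eulerMascheroniConstant - Real.log 2)) : ℝ) * (0 + -1 * Complex.I))
      = (y0 : ℂ) * ((Real.exp (2 * (Real.eulerMascheroniConstant - Real.log 2)) : ℝ) : ℂ) * (Complex.I * Complex.I * (-1)) := by ring
    _ = 1 := by rw [this, Complex.I_mul_I]; ring

lemma z_eq {z : ℂ} (hz : z ≠ 0) :
    z = Complex.I * (y0 : ℂ) * Complex.exp (Complex.log z + 4 * (Real.pi : ℂ) * beta0) := by
  rw [Complex.exp_add, Complex.exp_log hz]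
  calc z = Complex.I * (y0:ℂ) * Complex.exp (4 * (Real.pi : ℂ) * beta0) * z := by rw [one_eq]; ring
    _ = _ := by ring

/-- If `|log z + 4πβ₀| ≤ 1` then `z` is within `2 y₀ |·|` of `i y₀`. -/
lemma dist_res {z : ℂ} (hz : z ≠ 0)
    (h1 : Complex.abs (Complex.log z + 4 * (Real.pi : ℂ) * beta0) ≤ 1) :
    Complex.abs (z - Complex.I * (y0 : ℂ)) ≤
      2 * y0 * Complex.abs (Complex.log z + 4 * (Real.pi : ℂ) * beta0) := by
  set w := Complex.log z + 4 * (Real.pi : ℂ) * beta0 with hw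
  have h2 : z - Complex.I * (y0 : ℂ) = Complex.I * (y0 : ℂ) * (Complex.exp w - 1) := by
    rw [mul_sub, ← z_eq hz]; ring
  rw [h2, map_mul, map_mul]
  simp only [Complex.abs_I, Complex.abs_ofReal, one_mul]
  rw [abs_of_pos y0_pos]
  calc y0 * Complex.abs (Complex.exp w - 1) ≤ y0 * (2 * Complex.abs w) := by
        exact mul_le_mul_of_nonneg_left (Complex.abs_exp_sub_one_le h1) y0_pos.le
    _ = 2 * y0 * Complex.abs w := by ring

lemma exp_diff {a b : ℂ} (h : Complex.abs (a - b) ≤ 1) (hb : Complex.abs b ≤ 1) :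
    Complex.abs (Complex.exp a - Complex.exp b) ≤ 6 * Complex.abs (a - b) := by
  have h2 : Complex.exp a - Complex.exp b = Complex.exp b * (Complex.exp (a - b) - 1) := by
    rw [mul_sub, ← Complex.exp_add]; ring_nf
  rw [h2, map_mul]
  have hexp : Complex.abs (Complex.exp b) ≤ 3 := by
    rw [Complex.abs_exp]
    have : b.re ≤ 1 := le_trans (le_trans (le_abs_self _) (Complex.abs_re_le_abs b)) hb
    calc Real.exp b.re ≤ Real.exp 1 := Real.exp_le_exp.mpr this
      _ ≤ 3 := by linarith [Real.exp_one_lt_d9.le]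
  calc Complex.abs (Complex.exp b) * Complex.abs (Complex.exp (a-b) - 1)
      ≤ 3 * (2 * Complex.abs (a - b)) := by
        apply mul_le_mul hexp (Complex.abs_exp_sub_one_le h) (Complex.abs.nonneg _) (by norm_num)
    _ = 6 * Complex.abs (a - b) := by ring

/-- Lipschitz bound for `log` on the upper half plane `im ≥ m > 0`. -/
lemma log_lip_upper {m : ℝ} (hm : 0 < m) {z w : ℂ} (hz : m ≤ z.im) (hw : m ≤ w.im) :
    Complex.abs (Complex.log z - Complex.log w) ≤ (1/m) * Complex.abs (z - w) := by
  have hconv : Convex ℝ {u : ℂ | m ≤ u.im} := convex_halfSpace_im_ge m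
  have key := hconv.norm_image_sub_le_of_norm_hasFDerivWithin_le
    (f := Complex.log) (f' := fun u => ContinuousLinearMap.smulRight (1 : ℂ →L[ℂ] ℂ) u⁻¹)
    (fun u hu => by
      have hu' : u ∈ Complex.slitPlane := Complex.mem_slitPlane_iff.mpr (Or.inr (by
        simp only [Set.mem_setOf_eq] at hu; exact ne_of_gt (lt_of_lt_of_le hm hu)))
      exact (Complex.hasDerivAt_log hu').hasFDerivAt.hasFDerivWithinAt)
    (fun u hu => by
      simp only [ContinuousLinearMap.norm_smulRight_apply, ContinuousLinearMap.one_def,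
        ContinuousLinearMap.norm_id, one_mul, norm_inv]
      simp only [Set.mem_setOf_eq] at hu
      have h1 : m ≤ ‖u‖ := le_trans hu (le_trans (le_abs_self _) (Complex.abs_im_le_abs u))
      rw [inv_le_comm₀ (lt_of_lt_of_le hm h1) (by positivity : (0:ℝ) < 1/m)]
      · calc (1/m)⁻¹ = m := by field_simp
          _ ≤ ‖u‖ := h1)
    hw hz
  simpa [Complex.dist_eq, Complex.norm_eq_abs] using key

lemma log_lip_lower {m : ℝ} (hm : 0 < m) {z w : ℂ} (hz : z.im ≤ -m) (hw : w.im ≤ -m) :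
    Complex.abs (Complex.log z - Complex.log w) ≤ (1/m) * Complex.abs (z - w) := by
  have hz' : m ≤ (starRingEnd ℂ z).im := by simp only [Complex.conj_im]; linarith
  have hw' : m ≤ (starRingEnd ℂ w).im := by simp only [Complex.conj_im]; linarith
  have hargz : z.arg ≠ Real.pi := by
    intro h
    have := Complex.arg_eq_pi_iff.mp h
    have : z.im = 0 := this.2
    linarith
  have hargw : w.arg ≠ Real.pi := by
    intro h
    have := Complex.arg_eq_pi_iff.mp h
    have : w.im = 0 := this.2
    linarith
  have key := log_lip_upper hm hz' hw'
  rw [Complex.log_conj z hargz, Complex.log_conj w hargw] at key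
  rw [← map_sub, Complex.abs_conj, ← map_sub, Complex.abs_conj] at key
  exact key

section seq

/-- Basic contraction: if each `|ξ n| ≤ q (|ξ (n+1)| + |ξ (n-1)|)` with `q < 1/2`, then `ξ = 0`. -/
lemma contraction_zero {ξ : ℤ → ℂ} (hb : BddAbove (Set.range fun n => Complex.abs (ξ n)))
    {q : ℝ} (hq0 : 0 ≤ q) (hq : q < 1/2)
    (h : ∀ n : ℤ, Complex.abs (ξ n) ≤ q * (Complex.abs (ξ (n+1)) + Complex.abs (ξ (n-1)))) :
    ξ = 0 := by
  set M := ⨆ n : ℤ, Complex.abs (ξ n) with hM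
  have hle : ∀ n : ℤ, Complex.abs (ξ n) ≤ M := fun n => le_ciSup hb n
  have hM0 : 0 ≤ M := le_trans (Complex.abs.nonneg _) (hle 0)
  have hMle : M ≤ 2 * q * M := by
    apply ciSup_le
    intro n
    calc Complex.abs (ξ n) ≤ q * (Complex.abs (ξ (n+1)) + Complex.abs (ξ (n-1))) := h n
      _ ≤ q * (M + M) := by
          apply mul_le_mul_of_nonneg_left _ hq0
          exact add_le_add (hle _) (hle _)
      _ = 2 * q * M := by ring
  have : M ≤ 0 := by nlinarith
  funext n
  have := le_antisymm (le_trans (hle n) this) (Complex.abs.nonneg _)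
  simpa using Complex.abs.eq_zero.mp this

/-- Normalized solution bound: `ζ n₀ = 1`, off `n₀` the contraction holds with `q ≤ 1/8`;
then `|ζ n| ≤ 1` everywhere. -/
lemma normalized_le_one {ζ : ℤ → ℂ} {n₀ : ℤ}
    (hb : BddAbove (Set.range fun n => Complex.abs (ζ n))) (h1 : ζ n₀ = 1)
    {q : ℝ} (hq0 : 0 ≤ q) (hq : q ≤ 1/8)
    (h : ∀ n : ℤ, n ≠ n₀ → Complex.abs (ζ n) ≤ q * (Complex.abs (ζ (n+1)) + Complex.abs (ζ (n-1)))) :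
    ∀ n : ℤ, Complex.abs (ζ n) ≤ 1 := by
  set M := ⨆ n : ℤ, Complex.abs (ζ n) with hM
  have hle : ∀ n : ℤ, Complex.abs (ζ n) ≤ M := fun n => le_ciSup hb n
  have hM1 : 1 ≤ M := by
    have := hle n₀; rwa [h1, map_one] at this
  have hMle : M ≤ max 1 (2 * q * M) := by
    apply ciSup_le
    intro n
    rcases eq_or_ne n n₀ with rfl | hn
    · rw [h1, map_one]; exact le_max_left _ _
    · refine le_trans ?_ (le_max_right _ _)
      calc Complex.abs (ζ n) ≤ q * (Complex.abs (ζ (n+1)) + Complex.abs (ζ (n-1))) := h n hn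
        _ ≤ q * (M + M) := by
            apply mul_le_mul_of_nonneg_left _ hq0
            exact add_le_add (hle _) (hle _)
        _ = 2 * q * M := by ring
  have hMfin : M ≤ 1 := by
    rcases le_max_iff.mp hMle with h' | h'
    · exact h'
    · nlinarith
  exact fun n => le_trans (hle n) hMfin

/-- Inhomogeneous contraction: `Δ n₀ = 0`, off `n₀` we have
`|Δ n| ≤ q(|Δ(n+1)|+|Δ(n-1)|) + r` with `q ≤ 1/8`; then `|Δ n| ≤ (4/3) r`. -/
lemma inhom_bound {Δ : ℤ → ℂ} {n₀ : ℤ}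
    (hb : BddAbove (Set.range fun n => Complex.abs (Δ n))) (h0 : Δ n₀ = 0)
    {q r : ℝ} (hq0 : 0 ≤ q) (hq : q ≤ 1/8) (hr : 0 ≤ r)
    (h : ∀ n : ℤ, n ≠ n₀ →
      Complex.abs (Δ n) ≤ q * (Complex.abs (Δ (n+1)) + Complex.abs (Δ (n-1))) + r) :
    ∀ n : ℤ, Complex.abs (Δ n) ≤ (4/3) * r := by
  set D := ⨆ n : ℤ, Complex.abs (Δ n) with hD
  have hle : ∀ n : ℤ, Complex.abs (Δ n) ≤ D := fun n => le_ciSup hb n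
  have hD0 : 0 ≤ D := le_trans (Complex.abs.nonneg _) (hle 0)
  have hDle : D ≤ 2 * q * D + r := by
    apply ciSup_le
    intro n
    rcases eq_or_ne n n₀ with rfl | hn
    · rw [h0, map_zero]; positivity
    · calc Complex.abs (Δ n) ≤ q * (Complex.abs (Δ (n+1)) + Complex.abs (Δ (n-1))) + r := h n hn
        _ ≤ q * (D + D) + r := by
            have := add_le_add (hle (n+1)) (hle (n-1))
            nlinarith
        _ = 2 * q * D + r := by ring
  have hDfin : D ≤ (4/3) * r := by nlinarith
  exact fun n => le_trans (hle n) hDfin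

end seq

section strip

/-- the argument of `hfun` in the pole-set equation -/
noncomputable def zf (ω : ℝ) (p : ℂ) (n : ℤ) : ℂ := p + Complex.I * (ω : ℂ) * (n : ℂ)

/-- the denominator `log z + 4πβ₀` -/
noncomputable def dl (ω : ℝ) (p : ℂ) (n : ℤ) : ℂ :=
  Complex.log (zf ω p n) + 4 * (Real.pi : ℂ) * beta0

lemma zf_re (ω : ℝ) (p : ℂ) (n : ℤ) : (zf ω p n).re = p.re := by
  simp [zf, Complex.add_re, Complex.mul_re, Complex.mul_im]

lemma zf_im (ω : ℝ) (p : ℂ) (n : ℤ) : (zf ω p n).im = p.im + ω * n := by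
  simp [zf, Complex.add_im, Complex.mul_re, Complex.mul_im]

lemma zf_ne_zero {ω : ℝ} {p : ℂ} (hp : p.re < 0) (n : ℤ) : zf ω p n ≠ 0 := by
  intro h
  have := zf_re ω p n
  rw [h] at this
  simp at this
  linarith

lemma zf_sub (ω : ℝ) (p p' : ℂ) (n : ℤ) : zf ω p n - zf ω p' n = p - p' := by
  simp [zf]

lemma hfun_zf (ω : ℝ) (p : ℂ) (n : ℤ) :
    hfun (p + Complex.I * (ω : ℂ) * (n : ℤ)) = 2 * (Real.pi : ℂ) * Complex.I / dl ω p n := rfl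

lemma abs_two_pi_I : Complex.abs (2 * (Real.pi : ℂ) * Complex.I) = 2 * Real.pi := by
  simp [map_mul, Complex.abs_I, Complex.abs_ofReal, abs_of_pos Real.pi_pos, ← Complex.norm_eq_abs]

lemma abs_hfun_le {ω : ℝ} {p : ℂ} {n : ℤ} {c : ℝ} (hc : 0 < c) (h : c ≤ Complex.abs (dl ω p n)) :
    Complex.abs (hfun (p + Complex.I * (ω : ℂ) * (n : ℤ))) ≤ 2 * Real.pi / c := by
  rw [hfun_zf, map_div₀, abs_two_pi_I]
  exact div_le_div_of_nonneg_left (by positivity) hc h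

end strip

section pinning

/-- Resonance pinning: if `|dl ω p n|` is small then `n = n₀` and `p` lies in the resonance box. -/
lemma pin {ω : ℝ} (hω : 0 < ω) {n0 : ℤ} {μ η : ℝ} (hμ : μ = y0 - ω * n0)
    (hη0 : 0 < η) (hημ : 4 * η ≤ μ) (hEta2 : 4 * η ≤ ω - μ)
    {p : ℂ} (hre : p.re < 0) (him0 : 0 ≤ p.im) (himω : p.im ≤ ω)
    {n : ℤ} (hsm : Complex.abs (dl ω p n) < min 1 (η / (2 * y0))) :
    n = n0 ∧ |p.re| < η ∧ |p.im - μ| < η := by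
  have hz : zf ω p n ≠ 0 := zf_ne_zero hre n
  have h1 : Complex.abs (dl ω p n) ≤ 1 := le_of_lt (lt_of_lt_of_le hsm (min_le_left _ _))
  have hdist : Complex.abs (zf ω p n - Complex.I * (y0 : ℂ)) < η := by
    calc Complex.abs (zf ω p n - Complex.I * (y0 : ℂ))
        ≤ 2 * y0 * Complex.abs (dl ω p n) := dist_res hz h1
      _ < 2 * y0 * (η / (2 * y0)) := by
          apply mul_lt_mul_of_pos_left (lt_of_lt_of_le hsm (min_le_right _ _))
          have := y0_pos; positivity
      _ = η := by
          have h0 := y0_pos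
          field_simp
  have hre' : |p.re| < η := by
    have h2 : (zf ω p n - Complex.I * (y0 : ℂ)).re = p.re := by
      simp [Complex.sub_re, zf_re, Complex.mul_re]
    calc |p.re| = |(zf ω p n - Complex.I * (y0:ℂ)).re| := by rw [h2]
      _ ≤ Complex.abs (zf ω p n - Complex.I * (y0:ℂ)) := Complex.abs_re_le_abs _
      _ < η := hdist
  have him' : |p.im + ω * n - y0| < η := by
    have h2 : (zf ω p n - Complex.I * (y0 : ℂ)).im = p.im + ω * n - y0 := by
      simp [Complex.sub_im, zf_im, Complex.mul_im]
    calc |p.im + ω * n - y0| = |(zf ω p n - Complex.I * (y0:ℂ)).im| := by rw [h2]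
      _ ≤ Complex.abs (zf ω p n - Complex.I * (y0:ℂ)) := Complex.abs_im_le_abs _
      _ < η := hdist
  have hnn : n = n0 := by
    by_contra hne
    rcases lt_or_gt_of_ne hne with hlt | hgt
    · -- n ≤ n0 - 1, so ω * n ≤ ω * n0 - ω
      have hk : (n : ℝ) ≤ (n0 : ℝ) - 1 := by
        have : n ≤ n0 - 1 := by omega
        calc (n : ℝ) ≤ ((n0 - 1 : ℤ) : ℝ) := by exact_mod_cast Int.cast_le.mpr this
          _ = (n0 : ℝ) - 1 := by push_cast; ring
      have : p.im + ω * n - y0 ≤ -μ := by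
        have hmul : ω * (n : ℝ) ≤ ω * ((n0 : ℝ) - 1) := mul_le_mul_of_nonneg_left hk hω.le
        rw [hμ] at *
        nlinarith
      have := abs_lt.mp him'
      linarith
    · have hk : (n0 : ℝ) + 1 ≤ (n : ℝ) := by
        have : n0 + 1 ≤ n := by omega
        calc (n0 : ℝ) + 1 = ((n0 + 1 : ℤ) : ℝ) := by push_cast; ring
          _ ≤ (n : ℝ) := by exact_mod_cast Int.cast_le.mpr this
      have : ω - μ ≤ p.im + ω * n - y0 := by
        have hmul : ω * ((n0 : ℝ) + 1) ≤ ω * (n : ℝ) := mul_le_mul_of_nonneg_left hk hω.le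
        rw [hμ] at *
        nlinarith
      have := abs_lt.mp him'
      linarith
  refine ⟨hnn, hre', ?_⟩
  subst hnn
  have : p.im - μ = p.im + ω * n - y0 := by rw [hμ]; ring
  rw [this]
  exact him'

end pinning


set_option maxHeartbeats 1600000

/-- Under the no-resonance condition, there is `A₀ > 0` such that for `0 < |α₀| < A₀` the
set of `p ∈ S_ℓ(ω)` supporting a nontrivial `ℓ²` solution of `ξ = 𝓛(α₀,p)ξ` has at most one
element, which lies in the interior of the strip: `Im p ∈ (0,ω)`. -/
theorem at_most_one_pole_small_alpha (ω : ℝ) (hω : 0 < ω)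
    (hnores : ∀ N : ℕ,
      (N : ℝ) * ω ≠ Real.exp (2 * (Real.log 2 - Real.eulerMascheroniConstant))) :
    ∃ A₀ : ℝ, 0 < A₀ ∧ ∀ α₀ : ℝ, 0 < |α₀| → |α₀| < A₀ →
      (poleSet α₀ ω).Subsingleton ∧
      ∀ p ∈ poleSet α₀ ω, 0 < p.im ∧ p.im < ω := by
  have hy := y0_pos
  -- the resonant index and offset
  set n0 : ℤ := ⌊y0 / ω⌋ with hn0def
  have hn0nn : 0 ≤ n0 := Int.floor_nonneg.mpr (by positivity)
  set μ : ℝ := y0 - ω * n0 with hμdef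
  have hμ0 : 0 ≤ μ := by
    have := Int.floor_le (y0 / ω)
    have h2 : ω * (n0 : ℝ) ≤ y0 := by
      rw [hn0def]
      calc ω * (⌊y0/ω⌋ : ℝ) ≤ ω * (y0 / ω) := mul_le_mul_of_nonneg_left this hω.le
        _ = y0 := by field_simp
    simp only [hμdef]; linarith
  have hμω : μ < ω := by
    have := Int.lt_floor_add_one (y0 / ω)
    have h2 : y0 < ω * ((n0 : ℝ) + 1) := by
      calc y0 = ω * (y0 / ω) := by field_simp
        _ < ω * ((n0 : ℝ) + 1) := by
            apply mul_lt_mul_of_pos_left _ hω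
            exact this
    simp only [hμdef]; nlinarith
  have hμpos : 0 < μ := by
    rcases lt_or_eq_of_le hμ0 with h | h
    · exact h
    · exfalso
      apply hnores n0.toNat
      have hcast : ((n0.toNat : ℕ) : ℝ) = (n0 : ℝ) := by
        exact_mod_cast congrArg (Int.cast : ℤ → ℝ) (Int.toNat_of_nonneg hn0nn)
      rw [hcast, ← y0]
      simp only [hμdef] at h
      linarith
  -- geometric constants
  set η : ℝ := min μ (ω - μ) / 4 with hηdef
  have hη0 : 0 < η := by
    have h1 : 0 < min μ (ω - μ) := lt_min hμpos (by linarith)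
    positivity
  have hημ : 4 * η ≤ μ := by
    have := min_le_left μ (ω - μ); simp only [hηdef]; linarith
  have hη2 : 4 * η ≤ ω - μ := by
    have := min_le_right μ (ω - μ); simp only [hηdef]; linarith
  set c : ℝ := min 1 (η / (2 * y0)) with hcdef
  have hc0 : 0 < c := lt_min one_pos (by positivity)
  have hc1 : c ≤ 1 := min_le_left _ _
  set L : ℝ := 2 * Real.pi / (3 * η * c ^ 2) with hLdef
  have hL0 : 0 < L := by
    have := Real.pi_pos; positivity
  refine ⟨min (c / (16 * Real.pi)) (min 1 (1 / (1 + 64 * Real.pi * y0 * L))), ?_, ?_⟩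
  · have := Real.pi_pos
    refine lt_min (by positivity) (lt_min one_pos (by positivity))
  intro α₀ hα0 hαA
  have hπ := Real.pi_pos
  -- bounds on α₀
  have hαc : |α₀| ≤ c / (16 * Real.pi) := le_of_lt (lt_of_lt_of_le hαA (min_le_left _ _))
  have hα1 : |α₀| ≤ 1 / (16 * Real.pi) := by
    calc |α₀| ≤ c / (16 * Real.pi) := hαc
      _ ≤ 1 / (16 * Real.pi) := by gcongr
  have hαK : |α₀| ≤ 1 / (1 + 64 * Real.pi * y0 * L) :=
    le_of_lt (lt_of_lt_of_le hαA (le_trans (min_le_right _ _) (min_le_right _ _)))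
  have hαone : |α₀| ≤ 1 :=
    le_of_lt (lt_of_lt_of_le hαA (le_trans (min_le_right _ _) (min_le_left _ _)))
  set q : ℝ := 2 * Real.pi * |α₀| / c with hqdef
  have hq0 : 0 ≤ q := by positivity
  have hq18 : q ≤ 1 / 8 := by
    rw [hqdef, div_le_iff₀ hc0]
    calc 2 * Real.pi * |α₀| ≤ 2 * Real.pi * (c / (16 * Real.pi)) := by
          apply mul_le_mul_of_nonneg_left hαc (by positivity)
      _ = 1/8 * c := by field_simp; ring
  -- one step of the contraction estimate
  have hstep : ∀ (p : ℂ) (ξ : ℤ → ℂ),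
      (∀ n : ℤ, ξ n = -(α₀:ℂ) * hfun (p + Complex.I * (ω:ℂ) * (n:ℂ)) * (ξ (n+1) - ξ (n-1))) →
      ∀ n : ℤ, c ≤ Complex.abs (dl ω p n) →
      Complex.abs (ξ n) ≤ q * (Complex.abs (ξ (n+1)) + Complex.abs (ξ (n-1))) := by
    intro p ξ heq n hlb
    rw [heq n, map_mul, map_mul]
    have h1 : Complex.abs (-(α₀:ℂ)) = |α₀| := by
      rw [show -(α₀:ℂ) = ((-α₀ : ℝ) : ℂ) by push_cast; ring, Complex.abs_ofReal, abs_neg]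
    have h2 := abs_hfun_le hc0 hlb
    have h3 : Complex.abs (ξ (n+1) - ξ (n-1)) ≤ Complex.abs (ξ (n+1)) + Complex.abs (ξ (n-1)) := by
      simpa [← Complex.norm_eq_abs] using norm_sub_le (ξ (n+1)) (ξ (n-1))
    have h4 : |α₀| * (2 * Real.pi / c) = q := by rw [hqdef]; ring
    calc Complex.abs (-(α₀:ℂ)) * Complex.abs (hfun (p + Complex.I * (ω:ℂ) * (n:ℂ)))
          * Complex.abs (ξ (n+1) - ξ (n-1))
        ≤ |α₀| * (2 * Real.pi / c) * (Complex.abs (ξ (n+1)) + Complex.abs (ξ (n-1))) := by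
          rw [h1]
          apply mul_le_mul (mul_le_mul_of_nonneg_left h2 (abs_nonneg α₀)) h3
            (Complex.abs.nonneg _) (by positivity)
      _ = q * (Complex.abs (ξ (n+1)) + Complex.abs (ξ (n-1))) := by rw [h4]
  -- main structural result about any pole
  have main : ∀ p ∈ poleSet α₀ ω, (|p.re| < η ∧ |p.im - μ| < η) ∧
      (∀ m : ℤ, m ≠ n0 → c ≤ Complex.abs (dl ω p m)) ∧
      ∃ ζ : ℤ → ℂ, ζ n0 = 1 ∧ (∀ n : ℤ, Complex.abs (ζ n) ≤ 1) ∧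
        BddAbove (Set.range fun n => Complex.abs (ζ n)) ∧
        ∀ n : ℤ, ζ n = -(α₀:ℂ) * hfun (p + Complex.I * (ω:ℂ) * (n:ℂ)) * (ζ (n+1) - ζ (n-1)) := by
    intro p hp
    obtain ⟨hre, him, ξ, hl2, hξne, heq⟩ := hp
    obtain ⟨him0, himω⟩ := him
    have hbdd : BddAbove (Set.range fun n => Complex.abs (ξ n)) := by
      have hinf : Memℓp ξ ⊤ := hl2.of_exponent_ge le_top
      have := memℓp_infty_iff.mp hinf
      simpa [Complex.norm_eq_abs] using this
    have hres : ∃ n : ℤ, Complex.abs (dl ω p n) < c := by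
      by_contra hcon
      push_neg at hcon
      exact hξne (contraction_zero hbdd hq0 (by linarith) fun n => hstep p ξ heq n (hcon n))
    obtain ⟨n, hn⟩ := hres
    rw [hcdef] at hn
    obtain ⟨hnn0, hbox1, hbox2⟩ := pin hω hμdef hη0 hημ hη2 hre him0 himω hn
    have hoff : ∀ m : ℤ, m ≠ n0 → c ≤ Complex.abs (dl ω p m) := by
      intro m hm
      by_contra hcon
      push_neg at hcon
      rw [hcdef] at hcon
      exact hm (pin hω hμdef hη0 hημ hη2 hre him0 himω hcon).1
    have hξn0 : ξ n0 ≠ 0 := by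
      intro h0
      apply hξne
      apply contraction_zero hbdd hq0 (by linarith)
      intro m
      rcases eq_or_ne m n0 with rfl | hm
      · rw [h0, map_zero]; positivity
      · exact hstep p ξ heq m (hoff m hm)
    have hζeq : ∀ n : ℤ, (fun n => ξ n / ξ n0) n =
        -(α₀:ℂ) * hfun (p + Complex.I * (ω:ℂ) * (n:ℂ))
          * ((fun n => ξ n / ξ n0) (n+1) - (fun n => ξ n / ξ n0) (n-1)) := by
      intro n
      show ξ n / ξ n0 = _
      rw [heq n]
      ring
    have hζbdd : BddAbove (Set.range fun n => Complex.abs ((fun n => ξ n / ξ n0) n)) := by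
      obtain ⟨B, hB⟩ := hbdd
      refine ⟨B / Complex.abs (ξ n0), ?_⟩
      rintro x ⟨n, rfl⟩
      simp only [map_div₀]
      have hpos : 0 < Complex.abs (ξ n0) := Complex.abs.pos hξn0
      gcongr
      exact hB (Set.mem_range_self n)
    have hζ1 : (fun n => ξ n / ξ n0) n0 = 1 := div_self hξn0
    have hζle1 := normalized_le_one hζbdd hζ1 hq0 hq18
      (fun n hn' => hstep p _ hζeq n (hoff n hn'))
    exact ⟨⟨hbox1, hbox2⟩, hoff, _, hζ1, hζle1, hζbdd, hζeq⟩
  have e1 : Complex.abs (-(α₀:ℂ)) = |α₀| := by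
    rw [show -(α₀:ℂ) = ((-α₀ : ℝ) : ℂ) by push_cast; ring, Complex.abs_ofReal, abs_neg]
  have habs3 : ∀ (u v : ℂ) (b B : ℝ), Complex.abs u ≤ b → Complex.abs v ≤ B → 0 ≤ b →
      Complex.abs (-(α₀:ℂ) * u * v) ≤ |α₀| * b * B := by
    intro u v b B hu hv hb
    rw [map_mul, map_mul, e1]
    exact mul_le_mul (mul_le_mul_of_nonneg_left hu (abs_nonneg _)) hv
      (Complex.abs.nonneg _) (by positivity)
  have habssub : ∀ (a b : ℂ), Complex.abs (a - b) ≤ Complex.abs a + Complex.abs b := by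
    intro a b
    simpa [← Complex.norm_eq_abs] using norm_sub_le a b
  -- the resonant-index identity for a normalized solution
  have hδkey : ∀ (pp : ℂ) (ζζ : ℤ → ℂ), ζζ n0 = 1 →
      (∀ n : ℤ, ζζ n = -(α₀:ℂ) * hfun (pp + Complex.I * (ω:ℂ) * (n:ℂ)) * (ζζ (n+1) - ζζ (n-1))) →
      dl ω pp n0 = -(α₀:ℂ) * (2*(Real.pi:ℂ)*Complex.I) * (ζζ (n0+1) - ζζ (n0-1)) := by
    intro pp ζζ h1 heqq
    have h := heqq n0
    rw [h1, hfun_zf] at h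
    have hδ0 : dl ω pp n0 ≠ 0 := by
      intro h0
      rw [h0, div_zero] at h
      simp at h
    calc dl ω pp n0 = dl ω pp n0 * (1:ℂ) := (mul_one _).symm
      _ = dl ω pp n0 * (-(α₀:ℂ) * (2*(Real.pi:ℂ)*Complex.I / dl ω pp n0) * (ζζ (n0+1) - ζζ (n0-1))) := by
          rw [← h]
      _ = (-(α₀:ℂ) * (2*(Real.pi:ℂ)*Complex.I) * (ζζ (n0+1) - ζζ (n0-1)))
            * (dl ω pp n0 / dl ω pp n0) := by ring
      _ = -(α₀:ℂ) * (2*(Real.pi:ℂ)*Complex.I) * (ζζ (n0+1) - ζζ (n0-1)) := by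
          rw [div_self hδ0, mul_one]
  constructor
  · -- at most one pole
    intro p hp p' hp'
    obtain ⟨⟨hbA, hbB⟩, hoff, ζ, hζ1, hζle, hζbdd, hζeq⟩ := main p hp
    obtain ⟨⟨hbA', hbB'⟩, hoff', ζ', hζ1', hζle', hζbdd', hζeq'⟩ := main p' hp'
    have hre : p.re < 0 := hp.1
    have hre' : p'.re < 0 := hp'.1
    have hζ2q : ∀ n : ℤ, n ≠ n0 → Complex.abs (ζ n) ≤ 2 * q := by
      intro n hn
      calc Complex.abs (ζ n) ≤ q * (Complex.abs (ζ (n+1)) + Complex.abs (ζ (n-1))) :=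
            hstep p ζ hζeq n (hoff n hn)
        _ ≤ q * (1 + 1) := mul_le_mul_of_nonneg_left (add_le_add (hζle _) (hζle _)) hq0
        _ = 2 * q := by ring
    have hζ2q' : ∀ n : ℤ, n ≠ n0 → Complex.abs (ζ' n) ≤ 2 * q := by
      intro n hn
      calc Complex.abs (ζ' n) ≤ q * (Complex.abs (ζ' (n+1)) + Complex.abs (ζ' (n-1))) :=
            hstep p' ζ' hζeq' n (hoff' n hn)
        _ ≤ q * (1 + 1) := mul_le_mul_of_nonneg_left (add_le_add (hζle' _) (hζle' _)) hq0
        _ = 2 * q := by ring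
    have hδeq := hδkey p ζ hζ1 hζeq
    have hδeq' := hδkey p' ζ' hζ1' hζeq'
    -- smallness of the two resonant denominators
    have hwle : Complex.abs (ζ (n0+1) - ζ (n0-1)) ≤ 4 * q := by
      calc Complex.abs (ζ (n0+1) - ζ (n0-1)) ≤ Complex.abs (ζ (n0+1)) + Complex.abs (ζ (n0-1)) :=
            habssub _ _
        _ ≤ 2*q + 2*q := add_le_add (hζ2q _ (by omega)) (hζ2q _ (by omega))
        _ = 4 * q := by ring
    have hwle' : Complex.abs (ζ' (n0+1) - ζ' (n0-1)) ≤ 4 * q := by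
      calc Complex.abs (ζ' (n0+1) - ζ' (n0-1)) ≤ Complex.abs (ζ' (n0+1)) + Complex.abs (ζ' (n0-1)) :=
            habssub _ _
        _ ≤ 2*q + 2*q := add_le_add (hζ2q' _ (by omega)) (hζ2q' _ (by omega))
        _ = 4 * q := by ring
    have hnum116 : |α₀| * (2*Real.pi) * (4*q) ≤ 1/16 := by
      have hb : 8*Real.pi*q*|α₀| ≤ 8*Real.pi*q*(1/(16*Real.pi)) :=
        mul_le_mul_of_nonneg_left hα1 (by positivity)
      have he : 8*Real.pi*q*(1/(16*Real.pi)) = q/2 := by field_simp; ring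
      nlinarith [hq18]
    have habsδ : Complex.abs (dl ω p n0) ≤ 1/16 := by
      rw [hδeq, map_mul, map_mul, e1, abs_two_pi_I]
      calc |α₀| * (2*Real.pi) * Complex.abs (ζ (n0+1) - ζ (n0-1))
          ≤ |α₀| * (2*Real.pi) * (4*q) :=
            mul_le_mul_of_nonneg_left hwle (by positivity)
        _ ≤ 1/16 := hnum116
    have habsδ' : Complex.abs (dl ω p' n0) ≤ 1/16 := by
      rw [hδeq', map_mul, map_mul, e1, abs_two_pi_I]
      calc |α₀| * (2*Real.pi) * Complex.abs (ζ' (n0+1) - ζ' (n0-1))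
          ≤ |α₀| * (2*Real.pi) * (4*q) :=
            mul_le_mul_of_nonneg_left hwle' (by positivity)
        _ ≤ 1/16 := hnum116
    -- Lipschitz bound for the denominators
    have hloglip : ∀ m : ℤ, Complex.abs (dl ω p m - dl ω p' m)
        ≤ 1/(3*η) * Complex.abs (p - p') := by
      intro m
      have hdiff : dl ω p m - dl ω p' m
          = Complex.log (zf ω p m) - Complex.log (zf ω p' m) := by
        simp [dl]
      have hsub : zf ω p m - zf ω p' m = p - p' := zf_sub ω p p' m
      have h3η : (0:ℝ) < 3*η := by linarith
      have hpim := abs_lt.mp hbB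
      have hpim' := abs_lt.mp hbB'
      rcases le_or_gt 0 m with hm | hm
      · have hmr : (0:ℝ) ≤ (m:ℝ) := by exact_mod_cast hm
        have hz : 3*η ≤ (zf ω p m).im := by
          rw [zf_im]
          have : (0:ℝ) ≤ ω * m := mul_nonneg hω.le hmr
          linarith [hημ]
        have hz' : 3*η ≤ (zf ω p' m).im := by
          rw [zf_im]
          have : (0:ℝ) ≤ ω * m := mul_nonneg hω.le hmr
          linarith [hημ]
        rw [hdiff, ← hsub]
        exact log_lip_upper h3η hz hz'
      · have hmr : (m:ℝ) ≤ -1 := by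
          have : m ≤ -1 := by omega
          exact_mod_cast this
        have hωm : ω * (m:ℝ) ≤ -ω := by
          calc ω * (m:ℝ) ≤ ω * (-1) := mul_le_mul_of_nonneg_left hmr hω.le
            _ = -ω := by ring
        have hz : (zf ω p m).im ≤ -(3*η) := by
          rw [zf_im]
          linarith [hη2]
        have hz' : (zf ω p' m).im ≤ -(3*η) := by
          rw [zf_im]
          linarith [hη2]
        rw [hdiff, ← hsub]
        exact log_lip_lower h3η hz hz'
    -- Lipschitz bound for hfun off resonance
    have hhdiff : ∀ m : ℤ, m ≠ n0 →
        Complex.abs (hfun (p + Complex.I*(ω:ℂ)*(m:ℂ)) - hfun (p' + Complex.I*(ω:ℂ)*(m:ℂ)))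
          ≤ L * Complex.abs (p - p') := by
      intro m hm
      rw [hfun_zf, hfun_zf]
      have h1 : c ≤ Complex.abs (dl ω p m) := hoff m hm
      have h1' : c ≤ Complex.abs (dl ω p' m) := hoff' m hm
      have hd0 : dl ω p m ≠ 0 := by
        intro h0; rw [h0] at h1; simp at h1; linarith
      have hd0' : dl ω p' m ≠ 0 := by
        intro h0; rw [h0] at h1'; simp at h1'; linarith
      have heq2 : 2*(Real.pi:ℂ)*Complex.I / dl ω p m - 2*(Real.pi:ℂ)*Complex.I / dl ω p' m
          = 2*(Real.pi:ℂ)*Complex.I * (dl ω p' m - dl ω p m) / (dl ω p m * dl ω p' m) := by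
        field_simp
      rw [heq2, map_div₀, map_mul, abs_two_pi_I, map_mul]
      have hnum : 2*Real.pi * Complex.abs (dl ω p' m - dl ω p m)
          ≤ 2*Real.pi * (1/(3*η) * Complex.abs (p - p')) := by
        apply mul_le_mul_of_nonneg_left _ (by positivity)
        rw [show dl ω p' m - dl ω p m = -(dl ω p m - dl ω p' m) by ring, map_neg_eq_map]
        exact hloglip m
      have hden : c * c ≤ Complex.abs (dl ω p m) * Complex.abs (dl ω p' m) :=
        mul_le_mul h1 h1' hc0.le (Complex.abs.nonneg _)
      calc 2*Real.pi * Complex.abs (dl ω p' m - dl ω p m)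
            / (Complex.abs (dl ω p m) * Complex.abs (dl ω p' m))
          ≤ 2*Real.pi * (1/(3*η) * Complex.abs (p - p')) / (c * c) :=
            div_le_div₀ (by positivity) hnum (by positivity) hden
        _ = L * Complex.abs (p - p') := by
            rw [hLdef]
            have hη' : (3*η) ≠ 0 := by positivity
            have hc' : c ≠ 0 := hc0.ne'
            field_simp
    -- the difference of the normalized solutions
    have hΔ0 : (fun n => ζ n - ζ' n) n0 = 0 := by simp [hζ1, hζ1']
    have hΔbdd : BddAbove (Set.range fun n => Complex.abs ((fun n => ζ n - ζ' n) n)) := by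
      refine ⟨2, ?_⟩
      rintro x ⟨n, rfl⟩
      calc Complex.abs (ζ n - ζ' n) ≤ Complex.abs (ζ n) + Complex.abs (ζ' n) := habssub _ _
        _ ≤ 1 + 1 := add_le_add (hζle n) (hζle' n)
        _ = 2 := by norm_num
    have hΔrec : ∀ n : ℤ, n ≠ n0 → Complex.abs ((fun n => ζ n - ζ' n) n) ≤
        q * (Complex.abs ((fun n => ζ n - ζ' n) (n+1)) + Complex.abs ((fun n => ζ n - ζ' n) (n-1)))
          + 2 * |α₀| * (L * Complex.abs (p - p')) := by
      intro n hn
      simp only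
      have hid : ζ n - ζ' n = -(α₀:ℂ) * hfun (p + Complex.I*(ω:ℂ)*(n:ℂ))
            * ((ζ (n+1) - ζ' (n+1)) - (ζ (n-1) - ζ' (n-1)))
          + -(α₀:ℂ) * (hfun (p + Complex.I*(ω:ℂ)*(n:ℂ)) - hfun (p' + Complex.I*(ω:ℂ)*(n:ℂ)))
            * (ζ' (n+1) - ζ' (n-1)) := by
        rw [hζeq n, hζeq' n]
        ring
      rw [hid]
      have t1 : Complex.abs (-(α₀:ℂ) * hfun (p + Complex.I*(ω:ℂ)*(n:ℂ))
            * ((ζ (n+1) - ζ' (n+1)) - (ζ (n-1) - ζ' (n-1))))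
          ≤ q * (Complex.abs (ζ (n+1) - ζ' (n+1)) + Complex.abs (ζ (n-1) - ζ' (n-1))) := by
        have := habs3 (hfun (p + Complex.I*(ω:ℂ)*(n:ℂ)))
          ((ζ (n+1) - ζ' (n+1)) - (ζ (n-1) - ζ' (n-1)))
          (2*Real.pi/c) (Complex.abs (ζ (n+1) - ζ' (n+1)) + Complex.abs (ζ (n-1) - ζ' (n-1)))
          (abs_hfun_le hc0 (hoff n hn)) (habssub _ _) (by positivity)
        calc Complex.abs _ ≤ |α₀| * (2*Real.pi/c)
              * (Complex.abs (ζ (n+1) - ζ' (n+1)) + Complex.abs (ζ (n-1) - ζ' (n-1))) := this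
          _ = q * (Complex.abs (ζ (n+1) - ζ' (n+1)) + Complex.abs (ζ (n-1) - ζ' (n-1))) := by
              rw [hqdef]; ring
      have t2 : Complex.abs (-(α₀:ℂ)
            * (hfun (p + Complex.I*(ω:ℂ)*(n:ℂ)) - hfun (p' + Complex.I*(ω:ℂ)*(n:ℂ)))
            * (ζ' (n+1) - ζ' (n-1)))
          ≤ 2 * |α₀| * (L * Complex.abs (p - p')) := by
        have hv : Complex.abs (ζ' (n+1) - ζ' (n-1)) ≤ 2 := by
          calc Complex.abs (ζ' (n+1) - ζ' (n-1))
              ≤ Complex.abs (ζ' (n+1)) + Complex.abs (ζ' (n-1)) := habssub _ _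
            _ ≤ 1 + 1 := add_le_add (hζle' _) (hζle' _)
            _ = 2 := by norm_num
        have := habs3 _ _ (L * Complex.abs (p - p')) 2 (hhdiff n hn) hv (by positivity)
        calc Complex.abs _ ≤ |α₀| * (L * Complex.abs (p - p')) * 2 := this
          _ = 2 * |α₀| * (L * Complex.abs (p - p')) := by ring
      calc Complex.abs _ ≤ Complex.abs (-(α₀:ℂ) * hfun (p + Complex.I*(ω:ℂ)*(n:ℂ))
            * ((ζ (n+1) - ζ' (n+1)) - (ζ (n-1) - ζ' (n-1))))
          + Complex.abs (-(α₀:ℂ)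
            * (hfun (p + Complex.I*(ω:ℂ)*(n:ℂ)) - hfun (p' + Complex.I*(ω:ℂ)*(n:ℂ)))
            * (ζ' (n+1) - ζ' (n-1))) := by
            simp only [← Complex.norm_eq_abs]
            exact norm_add_le _ _
        _ ≤ _ := add_le_add t1 t2
    have hΔle := inhom_bound hΔbdd hΔ0 hq0 hq18 (by positivity) hΔrec
    -- upper bound on the difference of resonant denominators
    have hδδ : Complex.abs (dl ω p n0 - dl ω p' n0)
        ≤ 2*Real.pi * |α₀| * ((8/3) * (2 * |α₀| * (L * Complex.abs (p - p')))) := by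
      rw [hδeq, hδeq']
      have hww : -(α₀:ℂ) * (2*(Real.pi:ℂ)*Complex.I) * (ζ (n0+1) - ζ (n0-1))
          - -(α₀:ℂ) * (2*(Real.pi:ℂ)*Complex.I) * (ζ' (n0+1) - ζ' (n0-1))
          = -(α₀:ℂ) * (2*(Real.pi:ℂ)*Complex.I)
            * ((ζ (n0+1) - ζ' (n0+1)) - (ζ (n0-1) - ζ' (n0-1))) := by ring
      rw [hww, map_mul, map_mul, e1, abs_two_pi_I]
      have hwd : Complex.abs ((ζ (n0+1) - ζ' (n0+1)) - (ζ (n0-1) - ζ' (n0-1)))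
          ≤ (8/3) * (2 * |α₀| * (L * Complex.abs (p - p'))) := by
        calc Complex.abs ((ζ (n0+1) - ζ' (n0+1)) - (ζ (n0-1) - ζ' (n0-1)))
            ≤ Complex.abs (ζ (n0+1) - ζ' (n0+1)) + Complex.abs (ζ (n0-1) - ζ' (n0-1)) :=
              habssub _ _
          _ ≤ (4/3) * (2 * |α₀| * (L * Complex.abs (p - p')))
              + (4/3) * (2 * |α₀| * (L * Complex.abs (p - p'))) :=
              add_le_add (hΔle (n0+1)) (hΔle (n0-1))
          _ = (8/3) * (2 * |α₀| * (L * Complex.abs (p - p'))) := by ring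
      calc |α₀| * (2*Real.pi) * Complex.abs ((ζ (n0+1) - ζ' (n0+1)) - (ζ (n0-1) - ζ' (n0-1)))
          ≤ |α₀| * (2*Real.pi) * ((8/3) * (2 * |α₀| * (L * Complex.abs (p - p')))) :=
            mul_le_mul_of_nonneg_left hwd (by positivity)
        _ = 2*Real.pi * |α₀| * ((8/3) * (2 * |α₀| * (L * Complex.abs (p - p')))) := by ring
    -- lower bound: the map p ↦ dl is bi-Lipschitz near the resonance
    have hzne : zf ω p n0 ≠ 0 := zf_ne_zero hre n0
    have hzne' : zf ω p' n0 ≠ 0 := zf_ne_zero hre' n0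
    have hδsub1 : Complex.abs (dl ω p n0 - dl ω p' n0) ≤ 1 := by
      calc Complex.abs (dl ω p n0 - dl ω p' n0)
          ≤ Complex.abs (dl ω p n0) + Complex.abs (dl ω p' n0) := habssub _ _
        _ ≤ 1/16 + 1/16 := add_le_add habsδ habsδ'
        _ ≤ 1 := by norm_num
    have hlow : Complex.abs (p - p') ≤ 6*y0 * Complex.abs (dl ω p n0 - dl ω p' n0) := by
      have h1 : zf ω p n0 = Complex.I*(y0:ℂ)*Complex.exp (dl ω p n0) := z_eq hzne
      have h1' : zf ω p' n0 = Complex.I*(y0:ℂ)*Complex.exp (dl ω p' n0) := z_eq hzne'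
      have hsub : p - p' = zf ω p n0 - zf ω p' n0 := (zf_sub ω p p' n0).symm
      rw [hsub, h1, h1']
      have h2 : Complex.I*(y0:ℂ)*Complex.exp (dl ω p n0) - Complex.I*(y0:ℂ)*Complex.exp (dl ω p' n0)
          = Complex.I*(y0:ℂ)*(Complex.exp (dl ω p n0) - Complex.exp (dl ω p' n0)) := by ring
      rw [h2, map_mul, map_mul, Complex.abs_I, Complex.abs_ofReal, abs_of_pos hy, one_mul]
      calc y0 * Complex.abs (Complex.exp (dl ω p n0) - Complex.exp (dl ω p' n0))
          ≤ y0 * (6 * Complex.abs (dl ω p n0 - dl ω p' n0)) := by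
            apply mul_le_mul_of_nonneg_left _ hy.le
            exact exp_diff hδsub1 (le_trans habsδ' (by norm_num))
        _ = 6*y0 * Complex.abs (dl ω p n0 - dl ω p' n0) := by ring
    -- put the chain together
    have hchain : Complex.abs (p - p') ≤ 64*Real.pi*y0*L*α₀^2 * Complex.abs (p - p') := by
      calc Complex.abs (p - p') ≤ 6*y0 * Complex.abs (dl ω p n0 - dl ω p' n0) := hlow
        _ ≤ 6*y0 * (2*Real.pi * |α₀| * ((8/3) * (2 * |α₀| * (L * Complex.abs (p - p'))))) :=
            mul_le_mul_of_nonneg_left hδδ (by positivity)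
        _ = 64*Real.pi*y0*L*(|α₀| * |α₀|) * Complex.abs (p - p') := by ring
        _ = 64*Real.pi*y0*L*α₀^2 * Complex.abs (p - p') := by
            rw [show |α₀| * |α₀| = α₀^2 by rw [← sq_abs α₀]; ring]
    have hK : 64*Real.pi*y0*L*α₀^2 < 1 := by
      have hK0 : (0:ℝ) < 64*Real.pi*y0*L := by positivity
      have hsq : α₀^2 ≤ |α₀| := by
        rw [← sq_abs]
        nlinarith [abs_nonneg α₀, hαone]
      have h2 : 64*Real.pi*y0*L*α₀^2 ≤ 64*Real.pi*y0*L*(1/(1+64*Real.pi*y0*L)) := by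
        apply mul_le_mul_of_nonneg_left (le_trans hsq hαK) hK0.le
      have h3 : 64*Real.pi*y0*L*(1/(1+64*Real.pi*y0*L)) < 1 := by
        rw [mul_one_div, div_lt_one (by positivity)]
        linarith
      linarith
    have hd0 : Complex.abs (p - p') ≤ 0 := by nlinarith [Complex.abs.nonneg (p - p')]
    have := le_antisymm hd0 (Complex.abs.nonneg _)
    exact sub_eq_zero.mp (Complex.abs.eq_zero.mp this)
  · -- interior location
    intro p hp
    obtain ⟨⟨hbA, hbB⟩, -, -⟩ := main p hp
    have h2 := abs_lt.mp hbB
    constructor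
    · linarith [hημ, hη0]
    · linarith [hη2, hη0]
end
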